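/- There exists a universal constant c > 0 with the following property. Let 1 ≤ p < p₀ ≤ ∞, and let N ∈ 𝒩 be such that t ↦ N(t)^{1/α}/t is non-decreasing on (0,∞) for some α > 0. Then for every t > 0: ( ∫_t^∞ ds / ((s−t)^{p/p₀} · N^∧(s)^p) )^{1/p} ≤ c · 2^{1/α} · (1 − p/p₀)^{−1/p} · ( ∫_t^∞ ds / (s^{p/p₀} · N^∧(s)^p) )^{1/p} (with p/p₀ read as 0 when p₀ = ∞). -/

import Mathlib

open MeasureTheory Filter Set Metric
open scoped ENNReal NNReal Topology

noncomputable section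

/-- The class 𝒩 of continuous increasing functions mapping ℝ₊ onto ℝ₊. -/
structure MemN (N : ℝ → ℝ) : Prop where
  contOn : ContinuousOn N (Ici 0)
  strictMonoOn : StrictMonoOn N (Ici 0)
  mapsTo : MapsTo N (Ici 0) (Ici 0)
  surjOn : SurjOn N (Ici 0) (Ici 0)

/-- A Young function: convex, increasing, vanishing at 0. -/
structure IsYoung (N : ℝ → ℝ) : Prop where
  convexOn : ConvexOn ℝ (Ici 0) N
  strictMonoOn : StrictMonoOn N (Ici 0)
  zero : N 0 = 0

/-- The (generalized) inverse `N⁻¹` of `N : ℝ₊ → ℝ₊`. -/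
def ninv (N : ℝ → ℝ) (y : ℝ) : ℝ := sInf {t : ℝ | 0 ≤ t ∧ y ≤ N t}

/-- The adjoint function `N^∧(t) = 1 / N⁻¹(1/t)`. -/
def nwedge (N : ℝ → ℝ) (t : ℝ) : ℝ := 1 / ninv N (1 / t)

variable {Ω : Type*}

/-- The class ℱ of functions which are Lipschitz on every ball. -/
def LipschitzOnBalls [PseudoMetricSpace Ω] (f : Ω → ℝ) : Prop :=
  ∀ (x : Ω) (r : ℝ), ∃ K : ℝ≥0, LipschitzOnWith K f (Metric.ball x r)

/-- The modulus of the gradient `|∇f|(x)` (equal to 0 at isolated points). -/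
def gradNorm [PseudoMetricSpace Ω] (f : Ω → ℝ) (x : Ω) : ℝ :=
  limsup (fun y => |f y - f x| / dist y x) (𝓝[≠] x)

/-- `‖ |∇f| ‖_{L_q(μ)}`. -/
def gradLqNorm [PseudoMetricSpace Ω] [MeasurableSpace Ω] (μ : Measure Ω) (q : ℝ≥0∞)
    (f : Ω → ℝ) : ℝ≥0∞ :=
  eLpNorm (gradNorm f) q μ

/-- The Orlicz (quasi-)norm `‖f‖_{N(μ)}`. -/
def orliczNorm [MeasurableSpace Ω] (μ : Measure Ω) (N : ℝ → ℝ) (f : Ω → ℝ) : ℝ :=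
  sInf {v : ℝ | 0 < v ∧ ∫⁻ x, ENNReal.ofReal (N (|f x| / v)) ∂μ ≤ 1}

/-- The dual norm `‖f‖_{N(μ)*}`. -/
def dualOrliczNorm [MeasurableSpace Ω] (μ : Measure Ω) (N : ℝ → ℝ) (f : Ω → ℝ) : ℝ :=
  sSup {r : ℝ | ∃ g : Ω → ℝ, orliczNorm μ N g ≤ 1 ∧ r = ∫ x, f x * g x ∂μ}

/-- The weak Orlicz quasi-norm `‖f‖_{N(μ),∞} = sup_{t>0} N^∧(μ{|f|≥t})·t`. -/
def weakOrliczNorm [MeasurableSpace Ω] (μ : Measure Ω) (N : ℝ → ℝ) (f : Ω → ℝ) : ℝ :=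
  sSup {r : ℝ | ∃ t : ℝ, 0 < t ∧ r = nwedge N ((μ {x | t ≤ |f x|}).toReal) * t}

/-- `m` is a median of `f` under `μ`. -/
def IsMedian [MeasurableSpace Ω] (μ : Measure Ω) (f : Ω → ℝ) (m : ℝ) : Prop :=
  (1 / 2 : ℝ≥0∞) ≤ μ {x | m ≤ f x} ∧ (1 / 2 : ℝ≥0∞) ≤ μ {x | f x ≤ m}

/-- Minkowski's exterior boundary measure `μ⁺(A)`. -/
def boundaryMeasure [PseudoMetricSpace Ω] [MeasurableSpace Ω] (μ : Measure Ω) (A : Set Ω) :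
    ℝ≥0∞ :=
  liminf (fun ε : ℝ => (μ (Metric.thickening ε A) - μ A) / ENNReal.ofReal ε) (𝓝[>] (0 : ℝ))

/-- The isoperimetric profile `I(t)`: the maximal function with `μ⁺(A) ≥ I(μ(A))`. -/
def isoProfile [PseudoMetricSpace Ω] [MeasurableSpace Ω] (μ : Measure Ω) (t : ℝ) : ℝ≥0∞ :=
  ⨅ (A : Set Ω) (_ : MeasurableSet A) (_ : μ A = ENNReal.ofReal t), boundaryMeasure μ A

/-- `Ĩ(t) = min(I(t), I(1-t))`. -/
def tildeIsoProfile [PseudoMetricSpace Ω] [MeasurableSpace Ω] (μ : Measure Ω) (t : ℝ) : ℝ≥0∞ :=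
  min (isoProfile μ t) (isoProfile μ (1 - t))

/-- The `q`-capacity `Cap_q(a,b)`. -/
def capacity [PseudoMetricSpace Ω] [MeasurableSpace Ω] (μ : Measure Ω) (q a b : ℝ) : ℝ≥0∞ :=
  ⨅ (Φ : Ω → ℝ) (_ : LipschitzOnBalls Φ) (_ : ∀ x, Φ x ∈ Icc (0 : ℝ) 1)
    (_ : ENNReal.ofReal a ≤ μ {x | Φ x = 1}) (_ : ENNReal.ofReal (1 - b) ≤ μ {x | Φ x = 0}),
    gradLqNorm μ (ENNReal.ofReal q) Φ

/-- A log-concave function (of the form exp(-ψ) with ψ convex, ℝ ∪ {+∞} valued). -/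
def IsLogConcaveFn {E : Type*} [AddCommGroup E] [Module ℝ E] (f : E → ℝ) : Prop :=
  (∀ x, 0 ≤ f x) ∧
    ∀ x y : E, ∀ a b : ℝ, 0 ≤ a → 0 ≤ b → a + b = 1 → f x ^ a * f y ^ b ≤ f (a • x + b • y)

/-- An absolutely continuous log-concave measure on Euclidean space. -/
def IsLogConcaveMeasure {n : ℕ} (μ : Measure (EuclideanSpace ℝ (Fin n))) : Prop :=
  ∃ f : EuclideanSpace ℝ (Fin n) → ℝ, IsLogConcaveFn f ∧
    μ = volume.withDensity fun x => ENNReal.ofReal (f x)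

lemma MemN.zero' {N : ℝ → ℝ} (hN : MemN N) : N 0 = 0 := by
  obtain ⟨x, hx, hNx⟩ := hN.surjOn (mem_Ici.mpr le_rfl)
  have hx' : (0:ℝ) ≤ x := hx
  have h0 : 0 ≤ N 0 := hN.mapsTo (mem_Ici.mpr le_rfl)
  rcases hx'.eq_or_lt with h | h
  · rw [← h] at hNx; exact hNx
  · have := hN.strictMonoOn (mem_Ici.mpr le_rfl) (mem_Ici.mpr hx') h
    rw [hNx] at this; linarith

lemma ninv_eq {N : ℝ → ℝ} (hN : MemN N) {x : ℝ} (hx : 0 ≤ x) : ninv N (N x) = x := by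
  have hleast : IsLeast {t : ℝ | 0 ≤ t ∧ N x ≤ N t} x := by
    constructor
    · exact ⟨hx, le_rfl⟩
    · rintro s ⟨hs0, hsx⟩
      by_contra h
      push_neg at h
      exact absurd hsx (not_le.mpr (hN.strictMonoOn (mem_Ici.mpr hs0) (mem_Ici.mpr hx) h))
  exact hleast.csInf_eq

lemma exists_ninv {N : ℝ → ℝ} (hN : MemN N) {y : ℝ} (hy : 0 ≤ y) :
    0 ≤ ninv N y ∧ N (ninv N y) = y := by
  obtain ⟨x, hx, hNx⟩ := hN.surjOn (mem_Ici.mpr hy)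
  have hx' : (0:ℝ) ≤ x := hx
  have h := ninv_eq hN hx'
  rw [hNx] at h
  rw [h]
  exact ⟨hx', hNx⟩

lemma ninv_pos {N : ℝ → ℝ} (hN : MemN N) {y : ℝ} (hy : 0 < y) : 0 < ninv N y := by
  obtain ⟨h0, hNy⟩ := exists_ninv hN hy.le
  rcases h0.eq_or_lt with h | h
  · exfalso; rw [← h, hN.zero'] at hNy; linarith
  · exact h

lemma ninv_mono {N : ℝ → ℝ} (hN : MemN N) {y y' : ℝ} (hy : 0 ≤ y) (h : y ≤ y') :
    ninv N y ≤ ninv N y' := by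
  obtain ⟨h0, hNy⟩ := exists_ninv hN hy
  obtain ⟨h0', hNy'⟩ := exists_ninv hN (hy.trans h)
  by_contra hc
  push_neg at hc
  have := hN.strictMonoOn (mem_Ici.mpr h0') (mem_Ici.mpr h0) hc
  rw [hNy, hNy'] at this
  linarith

lemma nwedge_pos {N : ℝ → ℝ} (hN : MemN N) {s : ℝ} (hs : 0 < s) : 0 < nwedge N s :=
  div_pos one_pos (ninv_pos hN (by positivity))

lemma nwedge_mono {N : ℝ → ℝ} (hN : MemN N) {s s' : ℝ} (hs : 0 < s) (h : s ≤ s') :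
    nwedge N s ≤ nwedge N s' := by
  have hs' : (0:ℝ) < s' := lt_of_lt_of_le hs h
  have h1 : (0:ℝ) < 1 / s' := by positivity
  exact one_div_le_one_div_of_le (ninv_pos hN h1)
    (ninv_mono hN h1.le (one_div_le_one_div_of_le hs h))

lemma nwedge_double {N : ℝ → ℝ} (hN : MemN N) {α : ℝ} (hα : 0 < α)
    (hm : MonotoneOn (fun t => N t ^ (1 / α) / t) (Ioi (0 : ℝ)))
    {s : ℝ} (hs : 0 < s) : nwedge N (2 * s) ≤ 2 ^ (1 / α) * nwedge N s := by
  unfold nwedge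
  have h2s : (0:ℝ) < 1 / (2 * s) := by positivity
  have h1s : (0:ℝ) < 1 / s := by positivity
  set u := ninv N (1 / s) with hu_def
  set v := ninv N (1 / (2 * s)) with hv_def
  have hu : 0 < u := ninv_pos hN h1s
  have hv : 0 < v := ninv_pos hN h2s
  have hNu : N u = 1 / s := (exists_ninv hN h1s.le).2
  have hNv : N v = 1 / (2 * s) := (exists_ninv hN h2s.le).2
  have hc : (0:ℝ) < 2 ^ (-(1/α)) := Real.rpow_pos_of_pos two_pos _
  have hc1 : (2:ℝ) ^ (-(1/α)) ≤ 1 :=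
    Real.rpow_le_one_of_one_le_of_nonpos one_le_two (neg_nonpos.mpr (by positivity))
  set w := 2 ^ (-(1/α)) * u with hw_def
  have hw : 0 < w := by positivity
  have hwu : w ≤ u := by nlinarith
  have hkey := hm (mem_Ioi.mpr hw) (mem_Ioi.mpr hu) hwu
  simp only at hkey
  have hNw0 : 0 ≤ N w := hN.mapsTo (mem_Ici.mpr hw.le)
  have hNu0 : 0 ≤ N u := hN.mapsTo (mem_Ici.mpr hu.le)
  have h1 : N w ^ (1/α) * u ≤ N u ^ (1/α) * w := (div_le_div_iff₀ hw hu).mp hkey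
  have hwu_div : w / u = 2 ^ (-(1/α)) := by
    rw [hw_def]; field_simp
  have h2 : N w ^ (1/α) ≤ 2 ^ (-(1/α)) * N u ^ (1/α) := by
    calc N w ^ (1/α) = N w ^ (1/α) * u / u := by field_simp
      _ ≤ N u ^ (1/α) * w / u := by gcongr
      _ = (w / u) * N u ^ (1/α) := by ring
      _ = 2 ^ (-(1/α)) * N u ^ (1/α) := by rw [hwu_div]
  have hNvNu : N v = 2⁻¹ * N u := by rw [hNv, hNu]; field_simp
  have h3 : N w ^ (1/α) ≤ N v ^ (1/α) := by
    rw [hNvNu, Real.mul_rpow (by norm_num) hNu0, Real.inv_rpow (by norm_num),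
      ← Real.rpow_neg (by norm_num)]
    exact h2
  have hNv0 : 0 ≤ N v := hN.mapsTo (mem_Ici.mpr hv.le)
  have h4 : N w ≤ N v := by
    have hαinv : (1/α) * α = 1 := by field_simp
    have e1 : (N w ^ (1/α)) ^ α = N w := by
      rw [← Real.rpow_mul hNw0, hαinv, Real.rpow_one]
    have e2 : (N v ^ (1/α)) ^ α = N v := by
      rw [← Real.rpow_mul hNv0, hαinv, Real.rpow_one]
    calc N w = (N w ^ (1/α)) ^ α := e1.symm
      _ ≤ (N v ^ (1/α)) ^ α := Real.rpow_le_rpow (Real.rpow_nonneg hNw0 _) h3 hα.le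
      _ = N v := e2
  have hwv : w ≤ v := by
    by_contra hc'
    push_neg at hc'
    have := hN.strictMonoOn (mem_Ici.mpr hv.le) (mem_Ici.mpr hw.le) hc'
    linarith
  have h5 : 1 / v ≤ 1 / w := one_div_le_one_div_of_le hw hwv
  have hpow : (0:ℝ) < 2 ^ (1/α) := Real.rpow_pos_of_pos two_pos _
  have h6 : 1 / w = 2 ^ (1/α) * (1/u) := by
    rw [hw_def, Real.rpow_neg (by norm_num : (0:ℝ) ≤ 2)]
    field_simp
  linarith

lemma ofReal_div_le_div {a b c d : ℝ} (ha : 0 ≤ a) (hb : 0 < b) (hc : 0 ≤ c)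
    (hd : 0 < d) (h : a * d ≤ c * b) :
    ENNReal.ofReal a * (ENNReal.ofReal b)⁻¹ ≤ ENNReal.ofReal c * (ENNReal.ofReal d)⁻¹ := by
  rw [← ENNReal.ofReal_inv_of_pos hb, ← ENNReal.ofReal_inv_of_pos hd,
    ← ENNReal.ofReal_mul ha, ← ENNReal.ofReal_mul hc]
  apply ENNReal.ofReal_le_ofReal
  rw [← div_eq_mul_inv, ← div_eq_mul_inv]
  exact (div_le_div_iff₀ hb hd).mpr h

lemma inv_ofReal_le {a b C : ℝ} (hb : 0 < b) (hC : 0 < C) (h : b ≤ C * a) :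
    (ENNReal.ofReal a)⁻¹ ≤ ENNReal.ofReal C * (ENNReal.ofReal b)⁻¹ := by
  have ha : 0 < a := by nlinarith
  have key := ofReal_div_le_div zero_le_one ha hC.le hb (by linarith)
  simpa using key

set_option maxHeartbeats 1000000 in
/-- There is a universal constant `c > 0` such that for `1 ≤ p < p₀ ≤ ∞`
and `N ∈ 𝒩` with `N(t)^{1/α}/t` non-decreasing for some `α > 0`, for every `t > 0`:
`(∫_t^∞ ds/((s−t)^{p/p₀}·N^∧(s)^p))^{1/p}
  ≤ c·2^{1/α}·(1−p/p₀)^{−1/p}·(∫_t^∞ ds/(s^{p/p₀}·N^∧(s)^p))^{1/p}`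
(with `p/p₀` read as `0` when `p₀ = ∞`, via `p₀.toReal = 0`). -/
theorem shift_integral_comparison :
    ∃ c : ℝ, 0 < c ∧
      ∀ (N : ℝ → ℝ), MemN N →
      ∀ α : ℝ, 0 < α → MonotoneOn (fun t => N t ^ (1 / α) / t) (Ioi (0 : ℝ)) →
      ∀ (p : ℝ) (p₀ : ℝ≥0∞), 1 ≤ p → ENNReal.ofReal p < p₀ →
      ∀ t : ℝ, 0 < t →
        (∫⁻ s in Ioi t,
            (ENNReal.ofReal ((s - t) ^ (p / p₀.toReal) * nwedge N s ^ p))⁻¹) ^ (1 / p) ≤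
          ENNReal.ofReal (c * 2 ^ (1 / α) * (1 - p / p₀.toReal) ^ (-(1 / p))) *
            (∫⁻ s in Ioi t,
              (ENNReal.ofReal (s ^ (p / p₀.toReal) * nwedge N s ^ p))⁻¹) ^ (1 / p) := by
  refine ⟨4, by norm_num, ?_⟩
  intro N hN α hα hmono p p₀ hp hpp₀ t ht
  set θ : ℝ := p / p₀.toReal with hθ_def
  have hp0 : (0:ℝ) < p := lt_of_lt_of_le one_pos hp
  have hθ0 : 0 ≤ θ := div_nonneg hp0.le ENNReal.toReal_nonneg
  have hθ1 : θ < 1 := by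
    rcases eq_or_ne p₀ ∞ with h | h
    · simp [hθ_def, h]
    · have hlt : p < p₀.toReal := (ENNReal.ofReal_lt_iff_lt_toReal hp0.le h).mp hpp₀
      rw [hθ_def, div_lt_one (lt_of_le_of_lt hp0.le hlt)]
      exact hlt
  have h1θ : (0:ℝ) < 1 - θ := by linarith
  have hKpos : 0 < nwedge N t := nwedge_pos hN ht
  set K := nwedge N t with hK_def
  have hKp : 0 < K ^ p := Real.rpow_pos_of_pos hKpos p
  set P : ℝ := 2 ^ ((1/α) * p) with hP_def
  have hPA : P = (2 ^ (1/α)) ^ p := Real.rpow_mul (by norm_num) _ _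
  have hP0 : 0 < P := Real.rpow_pos_of_pos two_pos _
  have hP1 : 1 ≤ P := by
    have := Real.rpow_le_rpow_of_exponent_le one_le_two
      (show (0:ℝ) ≤ (1/α) * p by positivity)
    rwa [Real.rpow_zero] at this
  have hA : (0:ℝ) < 2 ^ (1/α) := Real.rpow_pos_of_pos two_pos _
  have h2θ : (2:ℝ) ^ θ ≤ 2 := by
    calc (2:ℝ) ^ θ ≤ 2 ^ (1:ℝ) := Real.rpow_le_rpow_of_exponent_le one_le_two hθ1.le
      _ = 2 := Real.rpow_one 2
  set f : ℝ → ℝ≥0∞ := fun s => (ENNReal.ofReal ((s - t) ^ θ * nwedge N s ^ p))⁻¹ with hf_def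
  set g : ℝ → ℝ≥0∞ := fun s => (ENNReal.ofReal (s ^ θ * nwedge N s ^ p))⁻¹ with hg_def
  -- split
  have hsplit : (∫⁻ s in Ioi t, f s) = (∫⁻ s in Ioc t (2*t), f s) + ∫⁻ s in Ioi (2*t), f s := by
    have hdisj : Disjoint (Ioc t (2*t)) (Ioi (2*t)) := by
      rw [Set.disjoint_left]
      intro x hx hx'
      exact absurd hx.2 (not_le.mpr hx')
    rw [← lintegral_union measurableSet_Ioi hdisj, Ioc_union_Ioi_eq_Ioi (by linarith)]
  -- tail estimate
  have htail : (∫⁻ s in Ioi (2*t), f s) ≤ ENNReal.ofReal 2 * ∫⁻ s in Ioi t, g s := by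
    calc (∫⁻ s in Ioi (2*t), f s) ≤ ∫⁻ s in Ioi (2*t), ENNReal.ofReal 2 * g s := by
          apply setLIntegral_mono' measurableSet_Ioi
          intro s hs
          have hs2t : 2*t < s := hs
          have hst : 0 < s := by linarith
          have hWs : 0 < nwedge N s := nwedge_pos hN hst
          have hWp : 0 < nwedge N s ^ p := Real.rpow_pos_of_pos hWs p
          have hsθ : 0 < s ^ θ := Real.rpow_pos_of_pos hst θ
          have hstep : s ^ θ ≤ 2 * (s - t) ^ θ := by
            have h2 : ((2:ℝ) * (s - t)) ^ θ = 2 ^ θ * (s - t) ^ θ :=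
              Real.mul_rpow (by norm_num) (by linarith)
            have h3 : s ^ θ ≤ (2 * (s - t)) ^ θ :=
              Real.rpow_le_rpow hst.le (by linarith) hθ0
            have h4 : (0:ℝ) ≤ (s - t) ^ θ := Real.rpow_nonneg (by linarith) θ
            nlinarith
          exact inv_ofReal_le (by positivity) two_pos (by nlinarith)
      _ = ENNReal.ofReal 2 * ∫⁻ s in Ioi (2*t), g s :=
          lintegral_const_mul' _ _ ENNReal.ofReal_ne_top
      _ ≤ ENNReal.ofReal 2 * ∫⁻ s in Ioi t, g s := by
          gcongr
          linarith
  -- near estimate, step 1: bound nwedge from below by K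
  have hnear1 : (∫⁻ s in Ioc t (2*t), f s) ≤
      (∫⁻ s in Ioc t (2*t), (ENNReal.ofReal ((s-t) ^ θ))⁻¹) * (ENNReal.ofReal (K ^ p))⁻¹ := by
    rw [← lintegral_mul_const' _ _ (by simp [hKp] : (ENNReal.ofReal (K ^ p))⁻¹ ≠ ∞)]
    apply setLIntegral_mono' measurableSet_Ioc
    intro s hs
    have hst : t < s := hs.1
    have hs0 : 0 < s := lt_trans ht hst
    have hsub : (0:ℝ) ≤ (s - t) ^ θ := Real.rpow_nonneg (by linarith) θ
    have hKW : K ≤ nwedge N s := nwedge_mono hN ht hst.le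
    have hKWp : K ^ p ≤ nwedge N s ^ p := Real.rpow_le_rpow hKpos.le hKW hp0.le
    rw [← ENNReal.mul_inv (Or.inr ENNReal.ofReal_ne_top) (Or.inl ENNReal.ofReal_ne_top),
      ← ENNReal.ofReal_mul hsub]
    exact ENNReal.inv_le_inv.mpr (ENNReal.ofReal_le_ofReal
      (mul_le_mul_of_nonneg_left hKWp hsub))
  -- translation
  have htrans : (∫⁻ s in Ioc t (2*t), (ENNReal.ofReal ((s-t) ^ θ))⁻¹)
      = ∫⁻ u in Ioc 0 t, (ENNReal.ofReal (u ^ θ))⁻¹ := by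
    have hmp : MeasurePreserving (fun u : ℝ => u + t) volume volume :=
      measurePreserving_add_right volume t
    have h := hmp.setLIntegral_comp_emb (measurableEmbedding_addRight t)
      (fun s => (ENNReal.ofReal ((s - t) ^ θ))⁻¹) (Ioc 0 t)
    rw [image_add_const_Ioc] at h
    simp only [zero_add] at h
    rw [show (2:ℝ)*t = t + t by ring]
    rw [← h]
    apply setLIntegral_congr_fun measurableSet_Ioc
    intro u hu
    simp
  -- computation
  have hcomp : (∫⁻ u in Ioc (0:ℝ) t, (ENNReal.ofReal (u ^ θ))⁻¹)
      = ENNReal.ofReal (t ^ (1-θ) / (1-θ)) := by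
    have h1 : EqOn (fun u : ℝ => (ENNReal.ofReal (u ^ θ))⁻¹)
        (fun u : ℝ => ENNReal.ofReal (u ^ (-θ))) (Ioc (0:ℝ) t) := by
      intro u hu
      show (ENNReal.ofReal (u ^ θ))⁻¹ = ENNReal.ofReal (u ^ (-θ))
      rw [Real.rpow_neg hu.1.le, ENNReal.ofReal_inv_of_pos (Real.rpow_pos_of_pos hu.1 θ)]
    rw [setLIntegral_congr_fun measurableSet_Ioc h1]
    have hint : IntegrableOn (fun u : ℝ => u ^ (-θ)) (Ioc 0 t) volume := by
      have := intervalIntegral.intervalIntegrable_rpow' (show (-1:ℝ) < -θ by linarith) (a := 0) (b := t)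
      rwa [intervalIntegrable_iff, uIoc_of_le ht.le] at this
    have hnn : 0 ≤ᵐ[volume.restrict (Ioc (0:ℝ) t)] fun u : ℝ => u ^ (-θ) := by
      rw [EventuallyLE, ae_restrict_iff' measurableSet_Ioc]
      filter_upwards with u hu
      exact Real.rpow_nonneg hu.1.le _
    rw [← ofReal_integral_eq_lintegral_ofReal hint hnn]
    congr 1
    have := integral_rpow (a := 0) (b := t) (r := -θ) (Or.inl (by linarith))
    rw [intervalIntegral.integral_of_le ht.le] at this
    rw [MeasureTheory.integral_Ioc_eq_integral_Ioo] at this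
    rw [MeasureTheory.integral_Ioc_eq_integral_Ioo, this,
      Real.zero_rpow (by linarith : -θ + 1 ≠ 0)]
    rw [show -θ + 1 = 1 - θ by ring]
    ring
  -- lower bound for RHS integral
  set c₀ : ℝ := (2*t) ^ θ * (2 ^ (1/α) * K) ^ p with hc₀_def
  have hc₀ : 0 < c₀ := by
    have := Real.rpow_pos_of_pos (show (0:ℝ) < 2*t by linarith) θ
    have := Real.rpow_pos_of_pos (mul_pos hA hKpos) p
    positivity
  have hRlow : ENNReal.ofReal t * (ENNReal.ofReal c₀)⁻¹ ≤ ∫⁻ s in Ioi t, g s := by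
    have hvol : volume (Ioc t (2*t)) = ENNReal.ofReal t := by
      rw [Real.volume_Ioc]; congr 1; ring
    calc ENNReal.ofReal t * (ENNReal.ofReal c₀)⁻¹
        = ∫⁻ _ in Ioc t (2*t), (ENNReal.ofReal c₀)⁻¹ ∂volume := by
          rw [setLIntegral_const, hvol, mul_comm]
      _ ≤ ∫⁻ s in Ioc t (2*t), g s := by
          apply setLIntegral_mono' measurableSet_Ioc
          intro s hs
          have hs0 : 0 < s := lt_trans ht hs.1
          have hsθ : s ^ θ ≤ (2*t) ^ θ := Real.rpow_le_rpow hs0.le hs.2 hθ0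
          have hWs : nwedge N s ≤ 2 ^ (1/α) * K := by
            calc nwedge N s ≤ nwedge N (2*t) := nwedge_mono hN hs0 hs.2
              _ ≤ 2 ^ (1/α) * K := nwedge_double hN hα hmono ht
          have hWsp : nwedge N s ^ p ≤ (2 ^ (1/α) * K) ^ p :=
            Real.rpow_le_rpow (nwedge_pos hN hs0).le hWs hp0.le
          apply ENNReal.inv_le_inv.mpr
          apply ENNReal.ofReal_le_ofReal
          have h1 : (0:ℝ) ≤ s ^ θ := Real.rpow_nonneg hs0.le θ
          have h2 : (0:ℝ) ≤ nwedge N s ^ p := Real.rpow_nonneg (nwedge_pos hN hs0).le p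
          calc s ^ θ * nwedge N s ^ p ≤ (2*t) ^ θ * nwedge N s ^ p :=
                mul_le_mul_of_nonneg_right hsθ h2
            _ ≤ (2*t) ^ θ * (2 ^ (1/α) * K) ^ p :=
                mul_le_mul_of_nonneg_left hWsp (Real.rpow_nonneg (by linarith) θ)
      _ ≤ ∫⁻ s in Ioi t, g s := lintegral_mono_set Ioc_subset_Ioi_self
  -- near estimate combined with lower bound
  set B : ℝ := 2 / (1-θ) * P with hB_def
  have hB0 : 0 < B := by positivity
  have hnear : (∫⁻ s in Ioc t (2*t), f s) ≤ ENNReal.ofReal B * ∫⁻ s in Ioi t, g s := by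
    have e1 : ((2:ℝ)*t) ^ θ = 2 ^ θ * t ^ θ := Real.mul_rpow (by norm_num) ht.le
    have e2 : ((2:ℝ) ^ (1/α) * K) ^ p = P * K ^ p := by
      rw [Real.mul_rpow hA.le hKpos.le, hPA]
    have e3 : t ^ (1-θ) * t ^ θ = t := by
      rw [← Real.rpow_add ht]
      norm_num
    have hreal : (t ^ (1-θ) / (1-θ)) * c₀ ≤ (B * t) * K ^ p := by
      rw [hc₀_def, e1, e2, hB_def]
      have h2θ0 : (0:ℝ) < 2 ^ θ := Real.rpow_pos_of_pos two_pos θ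
      have key : t ^ (1-θ) * (2 ^ θ * t ^ θ * (P * K ^ p)) = 2 ^ θ * t * (P * K ^ p) := by
        rw [show t ^ (1-θ) * (2 ^ θ * t ^ θ * (P * K ^ p))
            = 2 ^ θ * (t ^ (1-θ) * t ^ θ) * (P * K ^ p) by ring, e3]
      have key2 : 2 ^ θ * t * (P * K ^ p) ≤ 2 * t * (P * K ^ p) := by
        have hpos : (0:ℝ) ≤ t * (P * K ^ p) := by positivity
        nlinarith
      simp only [div_mul_eq_mul_div]
      rw [div_le_div_iff₀ h1θ h1θ]
      nlinarith [key, key2, h1θ]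
    calc (∫⁻ s in Ioc t (2*t), f s)
        ≤ (∫⁻ s in Ioc t (2*t), (ENNReal.ofReal ((s-t) ^ θ))⁻¹) * (ENNReal.ofReal (K ^ p))⁻¹ :=
          hnear1
      _ = ENNReal.ofReal (t ^ (1-θ) / (1-θ)) * (ENNReal.ofReal (K ^ p))⁻¹ := by
          rw [htrans, hcomp]
      _ ≤ ENNReal.ofReal (B * t) * (ENNReal.ofReal c₀)⁻¹ :=
          ofReal_div_le_div (by positivity) hKp (by positivity) hc₀ hreal
      _ = ENNReal.ofReal B * (ENNReal.ofReal t * (ENNReal.ofReal c₀)⁻¹) := by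
          rw [ENNReal.ofReal_mul hB0.le, mul_assoc]
      _ ≤ ENNReal.ofReal B * ∫⁻ s in Ioi t, g s := by gcongr
  -- combine
  set D : ℝ := 4 * P * (1-θ)⁻¹ with hD_def
  have hD0 : 0 < D := by positivity
  have hmain : (∫⁻ s in Ioi t, f s) ≤ ENNReal.ofReal D * ∫⁻ s in Ioi t, g s := by
    rw [hsplit]
    calc (∫⁻ s in Ioc t (2*t), f s) + ∫⁻ s in Ioi (2*t), f s
        ≤ ENNReal.ofReal B * (∫⁻ s in Ioi t, g s) + ENNReal.ofReal 2 * ∫⁻ s in Ioi t, g s :=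
          add_le_add hnear htail
      _ = (ENNReal.ofReal B + ENNReal.ofReal 2) * ∫⁻ s in Ioi t, g s := by
          rw [add_mul]
      _ ≤ ENNReal.ofReal D * ∫⁻ s in Ioi t, g s := by
          gcongr
          rw [← ENNReal.ofReal_add hB0.le (by norm_num)]
          apply ENNReal.ofReal_le_ofReal
          have h2le : (2:ℝ) ≤ 2*P/(1-θ) := by
            rw [le_div_iff₀ h1θ]
            nlinarith [hP1, hθ0]
          have e8 : 2 / (1-θ) * P = 2*P/(1-θ) := by ring
          have e9 : (4:ℝ) * P * (1-θ)⁻¹ = 2*P/(1-θ) + 2*P/(1-θ) := by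
            rw [← add_div, div_eq_mul_inv]
            ring
          rw [hB_def, hD_def, e8, e9]
          linarith [h2le]
  -- take p-th roots
  have hfrac : (0:ℝ) ≤ 1/p := by positivity
  calc (∫⁻ s in Ioi t, f s) ^ (1/p)
      ≤ (ENNReal.ofReal D * ∫⁻ s in Ioi t, g s) ^ (1/p) :=
        ENNReal.rpow_le_rpow hmain hfrac
    _ = (ENNReal.ofReal D) ^ (1/p) * (∫⁻ s in Ioi t, g s) ^ (1/p) :=
        ENNReal.mul_rpow_of_nonneg _ _ hfrac
    _ ≤ ENNReal.ofReal (4 * 2 ^ (1/α) * (1-θ) ^ (-(1/p))) * (∫⁻ s in Ioi t, g s) ^ (1/p) := by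
        gcongr
        rw [ENNReal.ofReal_rpow_of_pos hD0]
        apply ENNReal.ofReal_le_ofReal
        have e4 : D ^ (1/p) = 4 ^ (1/p) * P ^ (1/p) * ((1-θ)⁻¹) ^ (1/p) := by
          rw [hD_def, Real.mul_rpow (by positivity) (by positivity),
            Real.mul_rpow (by norm_num) hP0.le]
        have e5 : P ^ (1/p) = 2 ^ (1/α) := by
          rw [hP_def, ← Real.rpow_mul (by norm_num)]
          congr 1
          field_simp
        have e6 : ((1-θ)⁻¹) ^ (1/p) = (1-θ) ^ (-(1/p)) := by
          rw [Real.inv_rpow h1θ.le, ← Real.rpow_neg h1θ.le]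
        have e7 : (4:ℝ) ^ (1/p) ≤ 4 := by
          have h41 : (4:ℝ) ^ (1/p) ≤ 4 ^ (1:ℝ) :=
            Real.rpow_le_rpow_of_exponent_le (by norm_num)
              (by rw [div_le_one hp0]; exact hp)
          rwa [Real.rpow_one] at h41
        rw [e4, e5, e6]
        have h8 : (0:ℝ) < (1-θ) ^ (-(1/p)) := Real.rpow_pos_of_pos h1θ _
        nlinarith [mul_pos hA h8]


end
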